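/- Let D : C∞_c(M; E) → C∞_c(M; E) be a linear differential operator on sections of a vector bundle admitting advanced/retarded Green operators E± : C∞_c → C∞ with D∘E± = E±∘D = id on C∞_c and supp(E±f) ⊆ J±(supp f), and let E = E⁺ − E⁻. Then every smooth solution v of Dv = 0 whose support has compact intersection with each time slice {t} × Σ lies in the image of E: there exists f ∈ C∞_c with v = Ef. -/

import Mathlib

open Function

/-- Surjectivity of the propagator `E = E⁺ − E⁻` onto spatially compactly
supported solutions: given Green operators `E±` for a (support-nonincreasing)
operator `D`, with uniqueness of solutions with past/future bounded,
slicewise compact support, every solution `v` of `D v = 0` whose support meets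
each time slice in a compact set is of the form `v = E f = E⁺ f − E⁻ f`
for some compactly supported `f`. -/
theorem propagator_surjective_on_spatially_compact_solutions
    {S V : Type*} [TopologicalSpace S] [AddCommGroup V] [Module ℝ V]
    (D Ep Em : ((ℝ × S) → V) →ₗ[ℝ] ((ℝ × S) → V))
    (hDsupp : ∀ u : (ℝ × S) → V, Function.support (D u) ⊆ tsupport u)
    (hDEp : ∀ f, HasCompactSupport f → D (Ep f) = f)
    (hDEm : ∀ f, HasCompactSupport f → D (Em f) = f)
    (hEpD : ∀ f, HasCompactSupport f → Ep (D f) = f)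
    (hEmD : ∀ f, HasCompactSupport f → Em (D f) = f)
    (hsuppEp : ∀ f, HasCompactSupport f →
      ∃ t₀ : ℝ, ∀ p ∈ Function.support (Ep f), t₀ ≤ p.1)
    (hsuppEm : ∀ f, HasCompactSupport f →
      ∃ t₁ : ℝ, ∀ p ∈ Function.support (Em f), p.1 ≤ t₁)
    (hUniqP : ∀ (u : (ℝ × S) → V) (f : (ℝ × S) → V), HasCompactSupport f →
      D u = f → (∃ t₀ : ℝ, ∀ p ∈ Function.support u, t₀ ≤ p.1) →
      (∀ t : ℝ, IsCompact (tsupport u ∩ {p : ℝ × S | p.1 = t})) → u = Ep f)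
    (hUniqM : ∀ (u : (ℝ × S) → V) (f : (ℝ × S) → V), HasCompactSupport f →
      D u = f → (∃ t₁ : ℝ, ∀ p ∈ Function.support u, p.1 ≤ t₁) →
      (∀ t : ℝ, IsCompact (tsupport u ∩ {p : ℝ × S | p.1 = t})) → u = Em f)
    (v : (ℝ × S) → V) (hv : D v = 0)
    (hvslice : ∀ t : ℝ, IsCompact (tsupport v ∩ {p : ℝ × S | p.1 = t})) :
    ∃ f : (ℝ × S) → V, HasCompactSupport f ∧ v = Ep f - Em f := by
  classical
  -- split v at t = 0
  set vp : (ℝ × S) → V := fun p => if 0 ≤ p.1 then v p else 0 with hvp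
  set vm : (ℝ × S) → V := fun p => if 0 ≤ p.1 then 0 else v p with hvm
  have hsum : vp + vm = v := by
    funext p; by_cases h : 0 ≤ p.1 <;> simp [hvp, hvm, h]
  -- support inclusions
  have hsuppvp : tsupport vp ⊆ tsupport v ∩ {p : ℝ × S | 0 ≤ p.1} := by
    have h1 : Function.support vp ⊆ tsupport v ∩ {p : ℝ × S | 0 ≤ p.1} := by
      intro p hp
      by_cases h : 0 ≤ p.1
      · exact ⟨subset_closure (by simpa [hvp, h] using hp), h⟩
      · simp [hvp, h] at hp
    have hcl : IsClosed (tsupport v ∩ {p : ℝ × S | 0 ≤ p.1}) :=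
      (isClosed_tsupport v).inter (isClosed_le continuous_const continuous_fst)
    exact closure_minimal h1 hcl
  have hsuppvm : tsupport vm ⊆ tsupport v ∩ {p : ℝ × S | p.1 ≤ 0} := by
    have h1 : Function.support vm ⊆ tsupport v ∩ {p : ℝ × S | p.1 ≤ 0} := by
      intro p hp
      by_cases h : 0 ≤ p.1
      · simp [hvm, h] at hp
      · exact ⟨subset_closure (by simpa [hvm, h] using hp), le_of_not_ge h⟩
    have hcl : IsClosed (tsupport v ∩ {p : ℝ × S | p.1 ≤ 0}) :=
      (isClosed_tsupport v).inter (isClosed_le continuous_fst continuous_const)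
    exact closure_minimal h1 hcl
  set f : (ℝ × S) → V := D vp with hfdef
  have hDvm : D vm = -f := by
    have h0 : D vp + D vm = 0 := by rw [← map_add, hsum, hv]
    have := neg_eq_of_add_eq_zero_right h0
    rw [← this]
  -- f is supported in the slice t = 0, hence compactly supported
  have hsuppf : tsupport f ⊆ tsupport v ∩ {p : ℝ × S | p.1 = 0} := by
    have h1 : Function.support f ⊆ tsupport v ∩ {p : ℝ × S | p.1 = 0} := by
      intro p hp
      have hp1 : p ∈ tsupport vp := hDsupp vp hp
      have hp2 : p ∈ tsupport vm := by
        apply hDsupp vm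
        simpa [hDvm, Pi.neg_apply, neg_ne_zero] using hp
      have h1 := hsuppvp hp1
      have h2 := hsuppvm hp2
      exact ⟨h1.1, le_antisymm h2.2 h1.2⟩
    have hcl : IsClosed (tsupport v ∩ {p : ℝ × S | p.1 = 0}) :=
      (isClosed_tsupport v).inter (isClosed_eq continuous_fst continuous_const)
    exact closure_minimal h1 hcl
  have hf : HasCompactSupport f :=
    IsCompact.of_isClosed_subset (hvslice 0) (isClosed_tsupport f) hsuppf
  -- slicewise compactness for vp and -vm
  have hslicevp : ∀ t : ℝ, IsCompact (tsupport vp ∩ {p : ℝ × S | p.1 = t}) := by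
    intro t
    refine IsCompact.of_isClosed_subset (hvslice t)
      ((isClosed_tsupport vp).inter (isClosed_eq continuous_fst continuous_const)) ?_
    exact fun p hp => ⟨(hsuppvp hp.1).1, hp.2⟩
  have hsuppnegvm : tsupport (-vm) = tsupport vm := by
    unfold tsupport; rw [Function.support_neg]
  have hslicevm : ∀ t : ℝ, IsCompact (tsupport (-vm) ∩ {p : ℝ × S | p.1 = t}) := by
    intro t
    refine IsCompact.of_isClosed_subset (hvslice t)
      ((isClosed_tsupport (-vm)).inter (isClosed_eq continuous_fst continuous_const)) ?_
    rw [hsuppnegvm]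
    exact fun p hp => ⟨(hsuppvm hp.1).1, hp.2⟩
  -- uniqueness gives vp = Ep f and -vm = Em f
  have hvpEp : vp = Ep f := by
    apply hUniqP vp f hf rfl ?_ hslicevp
    refine ⟨0, fun p hp => ?_⟩
    exact (hsuppvp (subset_closure hp)).2
  have hvmEm : -vm = Em f := by
    apply hUniqM (-vm) f hf ?_ ?_ hslicevm
    · rw [map_neg, hDvm, neg_neg]
    · refine ⟨0, fun p hp => ?_⟩
      rw [Function.support_neg] at hp
      exact (hsuppvm (subset_closure hp)).2
  refine ⟨f, hf, ?_⟩
  rw [← hvpEp, ← hvmEm, sub_neg_eq_add, hsum]
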